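/- For every c > 1, let r* = sqrt(4c²/((c²+1)(3c²−1))). Then 1/c < r* < 1, and at r = r* the two bounds coincide: 2r²c²(1 − sqrt(1 − 1/(r²c²))) = (2/3)(r² + 1 + sqrt(r⁴ − r² + 1)) = 4c²/(3c² − 1). -/

import Mathlib

theorem hardest_radius (c r : ℝ) (hc : 1 < c)
    (hr : r = Real.sqrt (4 * c ^ 2 / ((c ^ 2 + 1) * (3 * c ^ 2 - 1)))) :
    1 / c < r ∧ r < 1 ∧
    2 * r ^ 2 * c ^ 2 * (1 - Real.sqrt (1 - 1 / (r ^ 2 * c ^ 2))) = 4 * c ^ 2 / (3 * c ^ 2 - 1) ∧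
    (2 / 3) * (r ^ 2 + 1 + Real.sqrt (r ^ 4 - r ^ 2 + 1)) = 4 * c ^ 2 / (3 * c ^ 2 - 1) := by
  have hc0 : (0:ℝ) < c := by linarith
  have hc2 : (1:ℝ) < c ^ 2 := by nlinarith
  have hD : (0:ℝ) < (c ^ 2 + 1) * (3 * c ^ 2 - 1) := by nlinarith
  have hApos : (0:ℝ) < 4 * c ^ 2 / ((c ^ 2 + 1) * (3 * c ^ 2 - 1)) := by positivity
  have hr0 : 0 < r := by rw [hr]; exact Real.sqrt_pos.mpr hApos
  have hr2 : r ^ 2 = 4 * c ^ 2 / ((c ^ 2 + 1) * (3 * c ^ 2 - 1)) := by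
    rw [hr]; exact Real.sq_sqrt hApos.le
  have hD1 : (3 * c ^ 2 - 1) ≠ 0 := by nlinarith
  have hD2 : (c ^ 2 + 1) ≠ 0 := by positivity
  refine ⟨?_, ?_, ?_, ?_⟩
  · have h : (1 / c) ^ 2 < r ^ 2 := by
      rw [hr2, div_pow, one_pow, div_lt_div_iff₀ (by positivity) hD]
      nlinarith [sq_nonneg (c ^ 2 - 1)]
    exact lt_of_pow_lt_pow_left₀ 2 hr0.le h
  · have h : r ^ 2 < 1 ^ 2 := by
      rw [hr2, one_pow, div_lt_one hD]; nlinarith [sq_nonneg (c ^ 2 - 1)]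
    exact lt_of_pow_lt_pow_left₀ 2 zero_le_one h
  · have h1 : 1 - 1 / (r ^ 2 * c ^ 2) = ((c ^ 2 - 1) / (2 * c ^ 2)) ^ 2 := by
      rw [hr2]; field_simp; ring
    rw [h1, Real.sqrt_sq (div_nonneg (by nlinarith) (by positivity)), hr2]
    field_simp; ring
  · have h2 : r ^ 4 - r ^ 2 + 1
        = ((3 * c ^ 4 + 1) / ((c ^ 2 + 1) * (3 * c ^ 2 - 1))) ^ 2 := by
      have h4 : r ^ 4 = (r ^ 2) ^ 2 := by ring
      rw [h4, hr2]; field_simp [show c ^ 2 * 3 - 1 ≠ 0 by nlinarith]; ring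
    rw [h2, Real.sqrt_sq (by positivity), hr2]
    field_simp; ring
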